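/- Let D^n, D : ℝ^d → [0,∞) be depth functions with compact convex superlevel sets having nonempty interior for levels in (0, α_max), where α_max = max D, and suppose D is continuous on ℝ^d. If D^n → D pointwise and the range condition limsup_n (max D^n) ≤ α_max holds, then D^n → D uniformly on ℝ^d. -/

import Mathlib

open Filter Metric Set Topology
set_option maxHeartbeats 1000000


private lemma lowerA {d : ℕ} (Dn : ℕ → EuclideanSpace ℝ (Fin d) → ℝ)
    (D : EuclideanSpace ℝ (Fin d) → ℝ)
    (hD_cpt : ∀ α : ℝ, 0 < α → IsCompact {z | α ≤ D z})
    (hDn_cvx : ∀ n, ∀ α : ℝ, 0 < α → Convex ℝ {z | α ≤ Dn n z})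
    (hD_cont : Continuous D)
    (hptw : ∀ z, Tendsto (fun n => Dn n z) atTop (nhds (D z)))
    (α η : ℝ) (hη : 0 < η) (hηα : η < α) :
    ∀ᶠ n in atTop, ∀ z, α ≤ D z → α - η ≤ Dn n z := by
  have hK : IsCompact {z | α ≤ D z} := hD_cpt α (hη.trans hηα)
  have hU : IsOpen {z | α - η < D z} := isOpen_lt continuous_const hD_cont
  have hmem : ∀ x ∈ {z : EuclideanSpace ℝ (Fin d) | α ≤ D z}, {z | α - η < D z} ∈ 𝓝 x := by
    intro x hx
    refine hU.mem_nhds ?_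
    have : α ≤ D x := hx
    simp only [mem_setOf_eq]; linarith
  choose b hb1 hb2 using fun (x : EuclideanSpace ℝ (Fin d)) (hx : x ∈ {z | α ≤ D z}) =>
    exists_mem_interior_convexHull_affineBasis (hmem x hx)
  obtain ⟨t, ht⟩ := hK.elim_nhds_subcover'
    (fun x hx => interior (convexHull ℝ (range (b x hx))))
    (fun x hx => isOpen_interior.mem_nhds (hb1 x hx))
  have hev : ∀ᶠ n in atTop, ∀ x ∈ t, ∀ i, α - η < Dn n (b x.1 x.2 i) := by
    rw [eventually_all_finset]
    intro x hx
    rw [eventually_all]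
    intro i
    have hy : α - η < D (b x.1 x.2 i) :=
      hb2 x.1 x.2 (subset_convexHull ℝ _ (mem_range_self i))
    exact (hptw _).eventually (eventually_gt_nhds hy)
  filter_upwards [hev] with n hn z hz
  have hz' := ht hz
  rw [mem_iUnion₂] at hz'
  obtain ⟨x, hxt, hzx⟩ := hz'
  have hhull : convexHull ℝ (range (b x.1 x.2)) ⊆ {w | α - η ≤ Dn n w} := by
    refine convexHull_min ?_ (hDn_cvx n (α - η) (by linarith))
    rintro y ⟨i, rfl⟩
    exact (hn x hxt i).le
  exact hhull (interior_subset hzx)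

private lemma lowerB {d : ℕ} (Dn : ℕ → EuclideanSpace ℝ (Fin d) → ℝ)
    (D : EuclideanSpace ℝ (Fin d) → ℝ)
    (hDn_nn : ∀ n z, 0 ≤ Dn n z)
    (hD_nn : ∀ z, 0 ≤ D z)
    (hD_cpt : ∀ α : ℝ, 0 < α → IsCompact {z | α ≤ D z})
    (hDn_cvx : ∀ n, ∀ α : ℝ, 0 < α → Convex ℝ {z | α ≤ Dn n z})
    (hD_cont : Continuous D)
    (hptw : ∀ z, Tendsto (fun n => Dn n z) atTop (nhds (D z)))
    (αmax : ℝ) (hub : ∀ z, D z ≤ αmax)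
    (hA : ∀ α η' : ℝ, 0 < η' → η' < α →
      ∀ᶠ n in atTop, ∀ z, α ≤ D z → α - η' ≤ Dn n z)
    (η : ℝ) (hη : 0 < η) :
    ∀ᶠ n in atTop, ∀ z, D z - η ≤ Dn n z := by
  set K : ℕ := ⌈αmax / (η / 2)⌉₊ with hK
  have hev : ∀ᶠ n in atTop, ∀ k ∈ Finset.range (K + 1),
      2 ≤ k → ∀ z, (k : ℝ) * (η / 2) ≤ D z → (k : ℝ) * (η / 2) - η / 2 ≤ Dn n z := by
    rw [eventually_all_finset]
    intro k _
    rcases le_or_gt 2 k with hk2 | hk2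
    · have h2 : (2:ℝ) ≤ (k:ℝ) := by exact_mod_cast hk2
      have : η / 2 < (k : ℝ) * (η / 2) := by nlinarith
      filter_upwards [hA ((k : ℝ) * (η / 2)) (η / 2) (by linarith) this] with n hn _ z
      exact hn z
    · filter_upwards with n hk; omega
  filter_upwards [hev] with n hn z
  rcases lt_or_ge (D z) η with hz | hz
  · have := hDn_nn n z; linarith
  · set k : ℕ := ⌊D z / (η / 2)⌋₊ with hkdef
    have hη2 : (0:ℝ) < η / 2 := by linarith
    have hfl : (k : ℝ) ≤ D z / (η / 2) := Nat.floor_le (div_nonneg (hD_nn z) hη2.le)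
    have hfl2 : D z / (η / 2) < (k : ℝ) + 1 := Nat.lt_floor_add_one _
    have hk2 : 2 ≤ k := by
      rw [hkdef]
      refine Nat.le_floor ?_
      rw [le_div_iff₀ hη2]; push_cast; linarith
    have hkK : k ∈ Finset.range (K + 1) := by
      refine Finset.mem_range.2 (Nat.lt_succ_of_le ?_)
      have h1 : (k:ℝ) ≤ αmax / (η/2) := hfl.trans (by
        gcongr; exact hub z)
      have h2 : αmax / (η/2) ≤ (K:ℝ) := Nat.le_ceil _
      exact_mod_cast h1.trans h2
    have hle : (k : ℝ) * (η / 2) ≤ D z := by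
      rw [← le_div_iff₀ hη2] at *; exact hfl
    have h2 : D z < ((k:ℝ) + 1) * (η / 2) := by
      rw [← div_lt_iff₀ hη2]; exact hfl2
    have := hn k hkK hk2 z hle
    nlinarith


private lemma upperC {d : ℕ} (Dn : ℕ → EuclideanSpace ℝ (Fin d) → ℝ)
    (D : EuclideanSpace ℝ (Fin d) → ℝ)
    (hD_cpt : ∀ α : ℝ, 0 < α → IsCompact {z | α ≤ D z})
    (hD_cvx : ∀ α : ℝ, 0 < α → Convex ℝ {z | α ≤ D z})
    (hDn_cvx : ∀ n, ∀ α : ℝ, 0 < α → Convex ℝ {z | α ≤ Dn n z})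
    (hD_cont : Continuous D)
    (αmax : ℝ)
    (hint : ∀ α : ℝ, 0 < α → α < αmax → (interior {z | α ≤ D z}).Nonempty)
    (hptw : ∀ z, Tendsto (fun n => Dn n z) atTop (nhds (D z)))
    (hlow : ∀ η : ℝ, 0 < η → ∀ᶠ n in atTop, ∀ z, D z - η ≤ Dn n z)
    (α δ : ℝ) (hδ : 0 < δ) (hδα : δ < α) (hα : α ≤ αmax) :
    ∀ᶠ n in atTop, ∀ z, α ≤ Dn n z → α - δ ≤ D z := by
  -- interior point of a high level set
  obtain ⟨x0, hx0⟩ := hint (α - δ/8) (by linarith) (by linarith)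
  obtain ⟨r, hr, hball⟩ := Metric.mem_nhds_iff.1 (mem_interior_iff_mem_nhds.1 hx0)
  -- the target-ish compact convex set C
  set C : Set (EuclideanSpace ℝ (Fin d)) := {z | α - δ/2 ≤ D z} with hCdef
  have hCcpt : IsCompact C := hD_cpt _ (by linarith)
  have hCcvx : Convex ℝ C := hD_cvx _ (by linarith)
  have hBC : ball x0 r ⊆ C := fun p hp => by
    have : α - δ/8 ≤ D p := hball hp
    simp only [hCdef, mem_setOf_eq]; linarith
  have hx0C : x0 ∈ C := hBC (mem_ball_self hr)
  obtain ⟨R0, hR0⟩ := hCcpt.isBounded.subset_closedBall x0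
  set R : ℝ := max R0 1 with hRdef
  have hR1 : (1:ℝ) ≤ R := le_max_right _ _
  have hRpos : (0:ℝ) < R := by linarith
  have hCR : C ⊆ closedBall x0 R := hR0.trans (closedBall_subset_closedBall (le_max_left _ _))
  set M : Set (EuclideanSpace ℝ (Fin d)) := closedBall x0 (2*R) with hMdef
  have hMcpt : IsCompact M := isCompact_closedBall _ _
  obtain ⟨ρ, hρ, hUC⟩ := Metric.uniformContinuousOn_iff.1
    (hMcpt.uniformContinuousOn_of_continuous hD_cont.continuousOn) (δ/2) (by linarith)
  set lam : ℝ := min 1 (ρ/(2*R)) with hlamdef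
  have hlam0 : 0 < lam := lt_min one_pos (by positivity)
  have hlam1 : lam ≤ 1 := min_le_left _ _
  have hlamρ : lam * R < ρ := by
    have : lam ≤ ρ/(2*R) := min_le_right _ _
    have h2 : lam * R ≤ ρ/(2*R) * R := mul_le_mul_of_nonneg_right this hRpos.le
    have h3 : ρ/(2*R)*R = ρ/2 := by field_simp
    linarith
  set ρ0 : ℝ := r * lam / 8 with hρ0def
  have hρ0 : 0 < ρ0 := by positivity
  obtain ⟨Y, hYM, hYfin, hYcov⟩ := finite_cover_balls_of_compact hMcpt hρ0
  have E2 : ∀ᶠ n in atTop, ∀ y ∈ Y, Dn n y < D y + δ/8 := by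
    rw [eventually_all_finite hYfin]
    intro y _
    exact (hptw y).eventually (eventually_lt_nhds (by linarith))
  filter_upwards [hlow (δ/8) (by linarith), E2] with n h1 h2 z hzn
  by_contra hzD
  push_neg at hzD
  set β : ℝ := α - δ/4 with hβdef
  have hβ : 0 < β := by simp only [hβdef]; linarith
  have hBDn : ∀ p ∈ ball x0 r, β ≤ Dn n p := fun p hp => by
    have hDp : α - δ/8 ≤ D p := hball hp
    have := h1 p
    simp only [hβdef]; linarith
  have hDx0 : α - δ/8 ≤ D x0 := hball (mem_ball_self hr)
  have hzx0 : z ≠ x0 := fun h => by rw [h] at hzD; linarith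
  set nz : ℝ := ‖z - x0‖ with hnzdef
  have hnz : 0 < nz := by
    rw [hnzdef, norm_pos_iff]
    exact sub_ne_zero_of_ne hzx0
  set I : Set ℝ := {s : ℝ | 0 ≤ s ∧ x0 + s • (z - x0) ∈ C} with hIdef
  have hptnorm : ∀ s : ℝ, 0 ≤ s → dist (x0 + s • (z - x0)) x0 = s * nz := by
    intro s hs
    rw [dist_eq_norm]
    simp only [add_sub_cancel_left, norm_smul, Real.norm_eq_abs, abs_of_nonneg hs, hnzdef]
  have hIne : r/(2*nz) ∈ I := by
    constructor
    · positivity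
    · refine hBC ?_
      rw [mem_ball, hptnorm _ (by positivity)]
      have : r/(2*nz)*nz = r/2 := by field_simp
      linarith
  have hIbdd : BddAbove I := by
    refine ⟨R/nz, fun s hs => ?_⟩
    have hm := hCR hs.2
    rw [mem_closedBall, hptnorm _ hs.1] at hm
    rw [le_div_iff₀ hnz]
    exact hm
  have hIclosed : IsClosed I := by
    have : I = Ici (0:ℝ) ∩ (fun s : ℝ => x0 + s • (z - x0)) ⁻¹' C := by
      ext s; simp [hIdef, mem_Ici, and_comm]
    rw [this]
    exact isClosed_Ici.inter (hCcpt.isClosed.preimage (continuous_const.add (continuous_id.smul continuous_const)))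
  set sS : ℝ := sSup I with hsSdef
  have hsI : sS ∈ I := hIclosed.csSup_mem ⟨_, hIne⟩ hIbdd
  have hs0 : 0 < sS := lt_of_lt_of_le (by positivity) (le_csSup hIbdd hIne)
  have h1lam : (0:ℝ) < 1 + lam := by linarith
  -- the (1+lam)-dilation point is outside C
  have hnotC : x0 + (1/(1+lam)) • (z - x0) ∉ C := by
    intro hc
    set c := x0 + (1/(1+lam)) • (z - x0) with hcdef
    have hcx0 : dist c x0 = (1/(1+lam)) * nz := hptnorm _ (by positivity)
    have hcR : dist c x0 ≤ R := by rw [← mem_closedBall]; exact hCR hc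
    have hnzR : nz ≤ (1+lam)*R := by
      rw [hcx0, div_mul_eq_mul_div, one_mul, div_le_iff₀ h1lam] at hcR
      linarith [mul_comm R (1+lam)]
    have hnz2R : nz ≤ 2*R := by nlinarith
    have hzc : dist z c = (lam/(1+lam)) * nz := by
      have hcoef : 1 - 1/(1+lam) = lam/(1+lam) := by
        rw [eq_div_iff h1lam.ne', sub_mul, one_mul, div_mul_cancel₀ _ h1lam.ne']
        ring
      have : z - c = (lam/(1+lam)) • (z - x0) := by
        rw [hcdef, ← hcoef, sub_smul, one_smul]
        abel
      rw [dist_eq_norm, this, norm_smul, Real.norm_eq_abs, abs_of_nonneg (by positivity), hnzdef]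
    have hzcρ : dist z c < ρ := by
      rw [hzc]
      have hle : lam/(1+lam) * nz ≤ lam * R := by
        rw [div_mul_eq_mul_div, div_le_iff₀ h1lam]
        nlinarith [hnzR, hlam0.le]
      linarith
    have hzM : z ∈ M := by rw [hMdef, mem_closedBall, dist_eq_norm]; exact hnz2R
    have hcM : c ∈ M := by
      rw [hMdef, mem_closedBall]
      refine hcR.trans ?_
      linarith
    have := hUC z hzM c hcM hzcρ
    rw [Real.dist_eq, abs_lt] at this
    have hcC : α - δ/2 ≤ D c := hc
    linarith
  have hslt : sS < 1/(1+lam) := by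
    by_contra hle
    push_neg at hle
    refine hnotC ?_
    set θ : ℝ := (1/(1+lam))/sS with hθdef
    have hθ0 : 0 ≤ θ := by positivity
    have hθ1 : θ ≤ 1 := by
      rw [hθdef, div_le_one hs0]
      exact hle
    have hcombo := hCcvx hx0C hsI.2 (by linarith : (0:ℝ) ≤ 1 - θ) hθ0 (by ring)
    have hθs : θ * sS = 1/(1+lam) := by
      rw [hθdef]; field_simp
    have heq : (1-θ) • x0 + θ • (x0 + sS • (z - x0)) = x0 + (1/(1+lam)) • (z - x0) := by
      rw [← hθs]
      match_scalars <;> ring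
    rwa [heq] at hcombo
  set t : ℝ := (1 + lam/2) * sS with htdef
  have ht0 : 0 < t := by positivity
  have hsS1 : sS * (1+lam) < 1 := by
    have h := mul_lt_mul_of_pos_right hslt h1lam
    rwa [one_div, inv_mul_cancel₀ h1lam.ne'] at h
  have htlt' : t * (1 + lam) < 1 + lam/2 := by
    have h := mul_lt_mul_of_pos_left hsS1 (show (0:ℝ) < 1 + lam/2 by linarith)
    have hexp : t * (1 + lam) = (1 + lam/2) * (sS * (1+lam)) := by rw [htdef]; ring
    rw [hexp]
    linarith [h]
  have h1t : lam/4 < 1 - t := by nlinarith [htlt', hlam0, hlam1, ht0, mul_self_nonneg lam]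
  have ht1 : t < 1 := by nlinarith [h1t, hlam0]
  set w := x0 + t • (z - x0) with hwdef
  have hsR : sS * nz ≤ R := by
    have hm := hCR hsI.2
    rw [mem_closedBall, hptnorm _ hs0.le] at hm
    exact hm
  have hwM : w ∈ M := by
    rw [hMdef, mem_closedBall, hwdef, hptnorm _ ht0.le, htdef]
    nlinarith
  obtain ⟨y, hyY, hwy⟩ := mem_iUnion₂.1 (hYcov hwM)
  have hdwy : dist w y < ρ0 := mem_ball.1 hwy
  set v := y - w with hvdef
  have hv : ‖v‖ < ρ0 := by rw [hvdef, ← dist_eq_norm, dist_comm]; exact hdwy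
  have h1t0 : (0:ℝ) < 1 - t := by linarith
  -- claim 1 : β ≤ Dn n y
  have claim1 : β ≤ Dn n y := by
    set q := x0 + ((1/(1-t)) • v) with hqdef
    have hqball : q ∈ ball x0 r := by
      rw [hqdef, mem_ball, dist_eq_norm]
      simp only [add_sub_cancel_left, norm_smul, Real.norm_eq_abs]
      rw [abs_of_nonneg (by positivity : (0:ℝ) ≤ 1/(1-t))]
      rw [div_mul_eq_mul_div, one_mul, div_lt_iff₀ h1t0]
      nlinarith
    have hyq : (1-t) • q + t • z = y := by
      have hvv : (1-t) • ((1/(1-t)) • v) = v := by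
        rw [smul_smul, mul_one_div, div_self h1t0.ne', one_smul]
      calc (1-t) • q + t • z = (1-t) • x0 + (1-t) • ((1/(1-t)) • v) + t • z := by
            rw [hqdef, smul_add]
        _ = (1-t) • x0 + v + t • z := by rw [hvv]
        _ = (x0 + t • (z - x0)) + v := by module
        _ = y := by rw [← hwdef, hvdef]; abel
    have hmem := hDn_cvx n β hβ (hBDn _ hqball)
      (show z ∈ {u | β ≤ Dn n u} from by simp only [mem_setOf_eq, hβdef]; linarith)
      h1t0.le ht0.le (by ring)
    rw [hyq] at hmem
    exact hmem
  -- claim 2 : y ∉ C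
  have claim2 : y ∉ C := by
    intro hyC
    set σ : ℝ := lam/8 with hσdef
    have hσ0 : 0 < σ := by positivity
    have hσ1 : σ ≤ 1/8 := by rw [hσdef]; linarith
    set u := ((σ-1)/σ) • v with hudef
    have hu : ‖u‖ < r := by
      rw [hudef, norm_smul, Real.norm_eq_abs, abs_div, abs_of_pos hσ0,
        abs_of_nonpos (by linarith : σ - 1 ≤ 0)]
      rw [div_mul_eq_mul_div, div_lt_iff₀ hσ0]
      have : ρ0 = r * σ := by rw [hρ0def, hσdef]; ring
      nlinarith [hv, norm_nonneg v]
    have hq2 : x0 + u ∈ C := hBC (by rw [mem_ball, dist_eq_norm]; simpa using hu)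
    have hcombo := hCcvx hyC hq2 (by linarith : (0:ℝ) ≤ 1 - σ) hσ0.le (by ring)
    have heq : (1-σ) • y + σ • (x0 + u) = x0 + ((1-σ)*t) • (z - x0) := by
      have hσu : σ • u = (σ - 1) • v := by
        rw [hudef, smul_smul, mul_div_cancel₀ _ hσ0.ne']
      calc (1-σ) • y + σ • (x0 + u) = (1-σ) • (w + v) + σ • x0 + σ • u := by
            rw [hvdef, smul_add]; module
        _ = (1-σ) • (w + v) + σ • x0 + (σ-1) • v := by rw [hσu]
        _ = (1-σ) • w + σ • x0 := by module
        _ = x0 + ((1-σ)*t) • (z - x0) := by rw [hwdef]; module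
    rw [heq] at hcombo
    have hmemI : (1-σ)*t ∈ I := ⟨by nlinarith, hcombo⟩
    have hles := le_csSup hIbdd hmemI
    have hexp2 : (1-σ)*t = (1-lam/8)*(1+lam/2)*sS := by rw [htdef, hσdef]; ring
    have key : (1:ℝ) + lam/4 ≤ (1-lam/8)*(1+lam/2) := by nlinarith [hlam0.le, hlam1]
    have h2' := mul_le_mul_of_nonneg_right key hs0.le
    nlinarith [h2', hles, hexp2, hs0, hlam0, mul_pos hlam0 hs0]
  have hyD : D y < α - δ/2 := by
    by_contra hge
    push_neg at hge
    exact claim2 hge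
  have := h2 y hyY
  simp only [hβdef] at claim1
  linarith

/-- For convex depth functions with `D` continuous, pointwise convergence of the depths
together with the range condition implies uniform convergence on `ℝ^d`. -/
theorem pointwise_and_range_condition_implies_uniform_convergence {d : ℕ}
    (Dn : ℕ → EuclideanSpace ℝ (Fin d) → ℝ) (D : EuclideanSpace ℝ (Fin d) → ℝ)
    (hDn_nn : ∀ n z, 0 ≤ Dn n z) (hD_nn : ∀ z, 0 ≤ D z)
    (hDn_cpt : ∀ n, ∀ α : ℝ, 0 < α → IsCompact {z | α ≤ Dn n z})
    (hD_cpt : ∀ α : ℝ, 0 < α → IsCompact {z | α ≤ D z})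
    (hDn_cvx : ∀ n, ∀ α : ℝ, 0 < α → Convex ℝ {z | α ≤ Dn n z})
    (hD_cvx : ∀ α : ℝ, 0 < α → Convex ℝ {z | α ≤ D z})
    (hD_cont : Continuous D)
    (αmax : ℝ) (hmax : IsGreatest (Set.range D) αmax)
    (hint : ∀ α : ℝ, 0 < α → α < αmax → (interior {z | α ≤ D z}).Nonempty)
    (hptw : ∀ z, Tendsto (fun n => Dn n z) atTop (nhds (D z)))
    (hRC : ∀ α : ℝ, αmax < α → ∃ N, ∀ n ≥ N, {z | α ≤ Dn n z} = ∅) :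
    TendstoUniformly (fun n => Dn n) D atTop := by
  have hub : ∀ z, D z ≤ αmax := fun z => hmax.2 (mem_range_self z)
  have hA : ∀ α η' : ℝ, 0 < η' → η' < α →
      ∀ᶠ n in atTop, ∀ z, α ≤ D z → α - η' ≤ Dn n z :=
    fun α η' h1 h2 => lowerA Dn D hD_cpt hDn_cvx hD_cont hptw α η' h1 h2
  have hlow : ∀ η : ℝ, 0 < η → ∀ᶠ n in atTop, ∀ z, D z - η ≤ Dn n z :=
    fun η hη => lowerB Dn D hDn_nn hD_nn hD_cpt hDn_cvx hD_cont hptw αmax hub hA η hη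
  have hupperC : ∀ α δ : ℝ, 0 < δ → δ < α → α ≤ αmax →
      ∀ᶠ n in atTop, ∀ z, α ≤ Dn n z → α - δ ≤ D z :=
    fun α δ h1 h2 h3 =>
      upperC Dn D hD_cpt hD_cvx hDn_cvx hD_cont αmax hint hptw hlow α δ h1 h2 h3
  rw [Metric.tendstoUniformly_iff]
  intro ε hε
  have hε4 : (0:ℝ) < ε/4 := by linarith
  set K : ℕ := ⌈αmax/(ε/4)⌉₊ + 1 with hK
  have hαK : αmax < (K:ℝ) * (ε/4) := by
    have h1 : αmax/(ε/4) < (K:ℝ) := by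
      have := Nat.le_ceil (αmax/(ε/4))
      push_cast [hK]; linarith
    rw [div_lt_iff₀ hε4] at h1; linarith [h1]
  have hemp : ∀ᶠ n in atTop, ∀ k ∈ Finset.range (K+1), αmax < (k:ℝ)*(ε/4) →
      ∀ z, Dn n z < (k:ℝ)*(ε/4) := by
    rw [eventually_all_finset]
    intro k _
    rcases lt_or_ge αmax ((k:ℝ)*(ε/4)) with hk | hk
    · obtain ⟨N', hN'⟩ := hRC _ hk
      filter_upwards [eventually_ge_atTop N'] with n hn _ z
      by_contra hcon
      push_neg at hcon
      have hz : z ∈ {z | (k:ℝ)*(ε/4) ≤ Dn n z} := hcon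
      rw [hN' n hn] at hz
      exact hz
    · filter_upwards with n h; linarith
  have hKmem : K ∈ Finset.range (K+1) := Finset.mem_range.2 (Nat.lt_succ_self K)
  have hupper : ∀ᶠ n in atTop, ∀ k ∈ Finset.range (K+1), 2 ≤ k → (k:ℝ)*(ε/4) ≤ αmax →
      ∀ z, (k:ℝ)*(ε/4) ≤ Dn n z → (k:ℝ)*(ε/4) - ε/4 ≤ D z := by
    rw [eventually_all_finset]
    intro k _
    rcases le_or_gt ((k:ℝ)*(ε/4)) αmax with hk | hk
    · rcases le_or_gt 2 k with h2 | h2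
      · have h2' : (2:ℝ) ≤ (k:ℝ) := by exact_mod_cast h2
        have hlt : ε/4 < (k:ℝ)*(ε/4) := by nlinarith
        filter_upwards [hupperC ((k:ℝ)*(ε/4)) (ε/4) hε4 hlt hk] with n hn _ _
        exact hn
      · filter_upwards with n h _; omega
    · filter_upwards with n _ hk'; linarith
  filter_upwards [hlow (ε/2) (by linarith), hupper, hemp] with n hL hU hE z
  have hKz : Dn n z < (K:ℝ)*(ε/4) := hE K hKmem hαK z
  rw [Real.dist_eq, abs_lt]
  refine ⟨?_, by linarith [hL z]⟩
  set k : ℕ := ⌊Dn n z/(ε/4)⌋₊ with hkdef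
  have hfl : (k:ℝ) ≤ Dn n z/(ε/4) := Nat.floor_le (div_nonneg (hDn_nn n z) hε4.le)
  have hfl2 : Dn n z/(ε/4) < (k:ℝ)+1 := Nat.lt_floor_add_one _
  have hkle : (k:ℝ)*(ε/4) ≤ Dn n z := by rw [← le_div_iff₀ hε4]; exact hfl
  have hkup : Dn n z < ((k:ℝ)+1)*(ε/4) := by rw [← div_lt_iff₀ hε4]; exact hfl2
  have hkK : k ∈ Finset.range (K+1) := by
    refine Finset.mem_range.2 (Nat.lt_succ_of_le ?_)
    have : (k:ℝ) ≤ (K:ℝ) := by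
      rcases le_or_gt (k:ℝ) (K:ℝ) with h | h
      · exact h
      · exfalso; nlinarith
    exact_mod_cast this
  rcases le_or_gt 2 k with h2 | h2
  · rcases le_or_gt ((k:ℝ)*(ε/4)) αmax with hc | hc
    · have := hU k hkK h2 hc z hkle
      linarith
    · exact absurd (hE k hkK hc z) (by linarith)
  · have h2' : (k:ℝ) < 2 := by exact_mod_cast h2
    have := hD_nn z
    nlinarith
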